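/- Every elementary sublattice L of the lattice of closed sets of a compact Hausdorff space X is separative: whenever a, b ∈ L with a ⊄ b, there exists c ∈ L with c ≤ a, c > ⊥, and c ⊓ b = ⊥. -/

import Mathlib

open FirstOrder TopologicalSpace

/-- Function symbols of the language of bounded lattices. -/
inductive LatFunc : ℕ → Type
  | bot : LatFunc 0
  | top : LatFunc 0
  | inf : LatFunc 2
  | sup : LatFunc 2

/-- The first-order language of bounded lattices. -/
def latticeLang : FirstOrder.Language where
  Functions := LatFunc
  Relations := fun _ => Empty

/-- Every bounded lattice is a structure for the language of bounded lattices. -/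
instance latticeLangStructure (α : Type*) [Lattice α] [BoundedOrder α] :
    latticeLang.Structure α where
  funMap {n} f x :=
    match f with
    | .bot => ⊥
    | .top => ⊤
    | .inf => x 0 ⊓ x 1
    | .sup => x 0 ⊔ x 1
  RelMap {n} r := r.elim

open FirstOrder.Language

/-- inf term -/
def tinf {α : Type} (t₁ t₂ : latticeLang.Term α) : latticeLang.Term α :=
  Term.func LatFunc.inf ![t₁, t₂]

def tbot {α : Type} : latticeLang.Term α := Term.func LatFunc.bot ![]

@[simp] lemma funMap_inf {M : Type*} [Lattice M] [BoundedOrder M] (x : Fin 2 → M) :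
    Structure.funMap (L := latticeLang) LatFunc.inf x = x 0 ⊓ x 1 := rfl

@[simp] lemma funMap_bot {M : Type*} [Lattice M] [BoundedOrder M] (x : Fin 0 → M) :
    Structure.funMap (L := latticeLang) LatFunc.bot x = ⊥ := rfl

@[simp] lemma realize_tinf {α : Type} {M : Type*} [Lattice M] [BoundedOrder M]
    (v : α → M) (t₁ t₂ : latticeLang.Term α) :
    (tinf t₁ t₂).realize v = t₁.realize v ⊓ t₂.realize v := by
  simp [tinf, Term.realize]

@[simp] lemma realize_tbot {α : Type} {M : Type*} [Lattice M] [BoundedOrder M]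
    (v : α → M) : (tbot : latticeLang.Term α).realize v = ⊥ := rfl

def vr (i : Fin 3) : latticeLang.Term ((Fin 3) ⊕ (Fin 0)) := Term.var (Sum.inl i)

def sepPsi : latticeLang.Formula (Fin 3) :=
  (Term.bdEqual (tinf (vr 2) (vr 0)) (vr 2)) ⊓
  ((∼(Term.bdEqual (vr 2) tbot)) ⊓ (Term.bdEqual (tinf (vr 2) (vr 1)) tbot))

lemma realize_sepPsi {M : Type*} [Lattice M] [BoundedOrder M] (w : Fin 3 → M) :
    sepPsi.Realize w ↔ (w 2 ≤ w 0 ∧ w 2 ≠ ⊥ ∧ w 2 ⊓ w 1 = ⊥) := by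
  simp [sepPsi, Formula.Realize, vr, Term.realize, inf_eq_left]

def sepPhi : latticeLang.Formula (Fin 2) :=
  BoundedFormula.ex
    (BoundedFormula.relabel (![Sum.inl 0, Sum.inl 1, Sum.inr 0] : Fin 3 → (Fin 2) ⊕ (Fin 1))
      sepPsi)

lemma realize_sepPsi' {M : Type*} [Lattice M] [BoundedOrder M] (v : Fin 3 → M)
    (xs : Fin 0 → M) :
    BoundedFormula.Realize sepPsi v xs ↔ (v 2 ≤ v 0 ∧ v 2 ≠ ⊥ ∧ v 2 ⊓ v 1 = ⊥) := by
  rw [show xs = default from Subsingleton.elim _ _]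
  exact realize_sepPsi v

lemma realize_sepPhi {M : Type*} [Lattice M] [BoundedOrder M] (w : Fin 2 → M) :
    sepPhi.Realize w ↔ ∃ c : M, c ≤ w 0 ∧ c ≠ ⊥ ∧ c ⊓ w 1 = ⊥ := by
  rw [sepPhi, Formula.Realize, BoundedFormula.realize_ex]
  refine exists_congr fun c => ?_
  rw [BoundedFormula.realize_relabel, realize_sepPsi']
  simp [Fin.snoc]

/-- Every elementary sublattice `L` of the lattice of closed sets of a compact Hausdorff
space `X` is separative: whenever `a, b ∈ L` with `¬ a ≤ b`, there exists `c ∈ L`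
with `c ≤ a`, `c ≠ ⊥` and `c ⊓ b = ⊥`. -/
theorem elementary_sublattice_separative (X : Type*) [TopologicalSpace X]
    [CompactSpace X] [T2Space X]
    (L : latticeLang.ElementarySubstructure (Closeds X))
    (a b : Closeds X) (ha : a ∈ L) (hb : b ∈ L) (hab : ¬ a ≤ b) :
    ∃ c ∈ L, c ≤ a ∧ c ≠ ⊥ ∧ c ⊓ b = ⊥ := by
  have hbig : sepPhi.Realize
      (((↑) : L → Closeds X) ∘ (![⟨a, ha⟩, ⟨b, hb⟩] : Fin 2 → L)) := by
    rw [realize_sepPhi]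
    obtain ⟨x, hxa, hxb⟩ : ∃ x, x ∈ a ∧ x ∉ b := by
      by_contra h
      push_neg at h
      exact hab fun x hx => h x hx
    refine ⟨⟨{x}, isClosed_singleton⟩, ?_, ?_, ?_⟩
    · intro y hy
      obtain rfl : y = x := hy
      exact hxa
    · intro h
      have : x ∈ (⊥ : Closeds X) := h ▸ rfl
      rw [← SetLike.mem_coe, Closeds.coe_bot] at this
      exact this
    · apply le_bot_iff.1
      rintro y ⟨hy1, hy2⟩
      obtain rfl : y = x := hy1
      exact absurd hy2 hxb
  have hS : sepPhi.Realize (![⟨a, ha⟩, ⟨b, hb⟩] : Fin 2 → L) :=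
    (L.isElementary sepPhi _).1 hbig
  obtain ⟨c, hc⟩ := BoundedFormula.realize_ex.1 hS
  rw [BoundedFormula.realize_relabel] at hc
  have hc2 : Formula.Realize (M := L) sepPsi
      (Sum.elim (![⟨a, ha⟩, ⟨b, hb⟩] : Fin 2 → L)
          ((Fin.snoc default c : Fin 1 → L) ∘ Fin.castAdd 0) ∘
        (![Sum.inl 0, Sum.inl 1, Sum.inr 0] : Fin 3 → (Fin 2) ⊕ (Fin 1))) := by
    unfold Formula.Realize
    convert hc using 1
  have hbig2 := (L.isElementary sepPsi _).2 hc2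
  rw [realize_sepPsi] at hbig2
  obtain ⟨h1, h2, h3⟩ := hbig2
  simp only [Function.comp_apply, Matrix.cons_val_zero, Matrix.cons_val_one, Matrix.head_cons,
    Sum.elim_inl, Sum.elim_inr, Fin.snoc, Matrix.cons_val_fin_one] at h1 h2 h3
  exact ⟨↑c, c.2, h1, h2, h3⟩
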